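/- Let f be a monic real polynomial of degree n ≥ 1 satisfying Assumption 1, with even/odd splitting f = p − q. Let a, b, x₀ be real numbers with a < x₀ < b, such that a is either 0 or a real root of f, b is a real root of f, f has no real root in the open interval (a, b), and p(x₀) > q(x₀). Define the sequences x_{t+1} = x_t · p(x_t)/q(x_t) and y₀ = x₀, y_{t+1} = y_t · q(y_t)/p(y_t). Then (x_t) is nondecreasing, remains in [x₀, b], and converges to b, while (y_t) is nonincreasing, remains in [a, x₀], and converges to a. -/

import Mathlib

open Filter

section Aux

open Polynomial

noncomputable def Complex.abs : AbsoluteValue ℂ ℝ where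
  toFun := fun z => ‖z‖
  map_mul' := norm_mul
  nonneg' := norm_nonneg
  eq_zero' _ := norm_eq_zero
  add_le' := norm_add_le

lemma Complex.abs_apply (z : ℂ) : Complex.abs z = Real.sqrt (Complex.normSq z) :=
  Complex.norm_def z

lemma Complex.abs_ofReal (r : ℝ) : Complex.abs (r : ℂ) = |r| := by
  show ‖(r : ℂ)‖ = |r|
  rw [Complex.norm_real, Real.norm_eq_abs]

lemma aux_abs_le {x : ℝ} (hx : 0 ≤ x) {z : ℂ} (hz : 0 ≤ z.re) :
    Complex.abs ((x:ℂ) - z) ≤ Complex.abs ((x:ℂ) + z) := by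
  rw [Complex.abs_apply, Complex.abs_apply]
  apply Real.sqrt_le_sqrt
  simp only [Complex.normSq_apply, Complex.sub_re, Complex.add_re, Complex.sub_im,
    Complex.add_im, Complex.ofReal_re, Complex.ofReal_im]
  nlinarith [mul_nonneg hx hz]

lemma aux_abs_lt {x : ℝ} (hx : 0 < x) {z : ℂ} (hz : 0 < z.re) :
    Complex.abs ((x:ℂ) - z) < Complex.abs ((x:ℂ) + z) := by
  rw [Complex.abs_apply, Complex.abs_apply]
  apply Real.sqrt_lt_sqrt (Complex.normSq_nonneg _)
  simp only [Complex.normSq_apply, Complex.sub_re, Complex.add_re, Complex.sub_im,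
    Complex.add_im, Complex.ofReal_re, Complex.ofReal_im]
  nlinarith [mul_pos hx hz]

lemma aux_prod_le {x : ℝ} (hx : 0 ≤ x) (s : Multiset ℂ) (hs : ∀ z ∈ s, 0 ≤ z.re) :
    (s.map (fun z => Complex.abs ((x:ℂ) - z))).prod
      ≤ (s.map (fun z => Complex.abs ((x:ℂ) + z))).prod := by
  induction s using Multiset.induction with
  | empty => simp
  | cons w t ih =>
    simp only [Multiset.map_cons, Multiset.prod_cons]
    have h1 := aux_abs_le hx (hs w (Multiset.mem_cons_self w t))
    have h2 := ih (fun z hz => hs z (Multiset.mem_cons_of_mem hz))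
    have hnn : (0:ℝ) ≤ (t.map (fun z => Complex.abs ((x:ℂ) - z))).prod :=
      Multiset.prod_nonneg (by
        intro u hu
        obtain ⟨z, _, rfl⟩ := Multiset.mem_map.mp hu
        exact AbsoluteValue.nonneg _ _)
    exact mul_le_mul h1 h2 hnn (AbsoluteValue.nonneg _ _)

lemma aux_prod_pos {x : ℝ} (hx : 0 < x) (s : Multiset ℂ) (hs : ∀ z ∈ s, 0 ≤ z.re) :
    0 < (s.map (fun z => Complex.abs ((x:ℂ) + z))).prod := by
  apply Multiset.prod_pos
  intro u hu
  obtain ⟨z, hz, rfl⟩ := Multiset.mem_map.mp hu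
  apply AbsoluteValue.pos
  intro h
  have h0 : ((x:ℂ) + z).re = 0 := by rw [h]; simp
  simp only [Complex.add_re, Complex.ofReal_re] at h0
  have := hs z hz
  linarith

end Aux

/-- Let `f` be a monic real polynomial of degree `n ≥ 1` satisfying
Assumption 1, with even/odd splitting `f = p - q`. Let `a < x₀ < b` with `a` either `0`
or a real root of `f`, `b` a real root of `f`, no real root of `f` in `(a, b)`, and
`p x₀ > q x₀`. Define `x 0 = y 0 = x₀`, `x (t+1) = x t * p (x t) / q (x t)` and
`y (t+1) = y t * q (y t) / p (y t)`. Then `x` is nondecreasing, remains in `[x₀, b]`,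
and converges to `b`, while `y` is nonincreasing, remains in `[a, x₀]`, and converges
to `a`. -/
theorem stmt9 (f : Polynomial ℝ) (n : ℕ) (hn : 1 ≤ n)
    (hmonic : f.Monic) (hdeg : f.natDegree = n)
    (has1 : ∀ z : ℂ, (Polynomial.aeval z) f = 0 → 0 ≤ z.re)
    (has2 : ∃ z : ℂ, (Polynomial.aeval z) f = 0 ∧ 0 < z.re)
    (p q : ℝ → ℝ)
    (hp : ∀ x : ℝ, p x =
      ∑ j ∈ Finset.range (n + 1), if (n + j) % 2 = 0 then f.coeff j * x ^ j else 0)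
    (hq : ∀ x : ℝ, q x =
      ∑ j ∈ Finset.range (n + 1), if (n + j) % 2 = 1 then -(f.coeff j) * x ^ j else 0)
    (a b x₀ : ℝ) (hax₀ : a < x₀) (hx₀b : x₀ < b)
    (ha : a = 0 ∨ f.IsRoot a) (hb : f.IsRoot b)
    (hnoroot : ∀ x : ℝ, a < x → x < b → ¬ f.IsRoot x)
    (hpq : q x₀ < p x₀)
    (x y : ℕ → ℝ) (hx0 : x 0 = x₀) (hy0 : y 0 = x₀)
    (hxrec : ∀ t : ℕ, x (t + 1) = x t * p (x t) / q (x t))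
    (hyrec : ∀ t : ℕ, y (t + 1) = y t * q (y t) / p (y t)) :
    (Monotone x ∧ (∀ t, x t ∈ Set.Icc x₀ b) ∧ Tendsto x atTop (nhds b)) ∧
    (Antitone y ∧ (∀ t, y t ∈ Set.Icc a x₀) ∧ Tendsto y atTop (nhds a)) := by
  classical
  open Polynomial in
  -- The complexified polynomial and its roots
  set g := f.map (algebraMap ℝ ℂ) with hgdef
  have hgmonic : g.Monic := hmonic.map _
  have hg0 : g ≠ 0 := hgmonic.ne_zero
  have hgeval : ∀ u : ℝ, g.eval (u:ℂ) = ((f.eval u : ℝ) : ℂ) := by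
    intro u
    rw [hgdef, Polynomial.eval_map, show ((u:ℂ)) = algebraMap ℝ ℂ u from rfl,
      Polynomial.eval₂_at_apply]
    rfl
  have haevalg : ∀ z : ℂ, (Polynomial.aeval z) f = g.eval z := by
    intro z
    rw [Polynomial.aeval_def, hgdef, Polynomial.eval_map]
  have hroot_nonneg : ∀ r : ℝ, f.IsRoot r → 0 ≤ r := by
    intro r hr
    have h := has1 (r:ℂ) (by
      rw [haevalg, hgeval]
      simp [hr.eq_zero])
    simpa using h
  have hre : ∀ z ∈ g.roots, 0 ≤ z.re := by
    intro z hz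
    exact has1 z (by rw [haevalg]; exact ((Polynomial.mem_roots hg0).mp hz))
  have hfact : ∀ u : ℂ, g.eval u = (g.roots.map (fun z => u - z)).prod := by
    intro u
    conv_lhs => rw [(IsAlgClosed.splits g).eq_prod_roots_of_monic hgmonic]
    rw [Polynomial.eval_multiset_prod, Multiset.map_map]
    simp
  have habsf : ∀ u : ℝ,
      |f.eval u| = (g.roots.map (fun z => Complex.abs ((u:ℂ) - z))).prod := by
    intro u
    rw [← Complex.abs_ofReal, ← hgeval u, hfact, map_multiset_prod, Multiset.map_map]
    rfl
  have habsfneg : ∀ u : ℝ,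
      |f.eval (-u)| = (g.roots.map (fun z => Complex.abs ((u:ℂ) + z))).prod := by
    intro u
    rw [← Complex.abs_ofReal, ← hgeval (-u), hfact, map_multiset_prod, Multiset.map_map]
    apply congrArg
    apply Multiset.map_congr rfl
    intro z _
    show Complex.abs ((((-u : ℝ)):ℂ) - z) = Complex.abs ((u:ℂ) + z)
    have he : (((-u : ℝ)):ℂ) - z = -((u:ℂ) + z) := by push_cast; ring
    rw [he, map_neg_eq_map]
  -- the auxiliary function N
  set Nf : ℝ → ℝ := fun u => (-1)^n * f.eval (-u) with hNf
  have habsN : ∀ u : ℝ,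
      |Nf u| = (g.roots.map (fun z => Complex.abs ((u:ℂ) + z))).prod := by
    intro u
    rw [hNf]
    simp only [abs_mul, abs_pow, abs_neg, abs_one, one_pow, one_mul]
    exact habsfneg u
  obtain ⟨w, hw0, hwre⟩ := has2
  have hwroot : w ∈ g.roots := by
    rw [Polynomial.mem_roots hg0]
    rw [haevalg] at hw0
    exact hw0
  have habslt : ∀ u : ℝ, 0 < u → |f.eval u| < |Nf u| := by
    intro u hu
    obtain ⟨s, hs⟩ := Multiset.exists_cons_of_mem hwroot
    have hres : ∀ z ∈ s, 0 ≤ z.re := fun z hz => hre z (hs ▸ Multiset.mem_cons_of_mem hz)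
    rw [habsf, habsN, hs]
    simp only [Multiset.map_cons, Multiset.prod_cons]
    have hQpos := aux_prod_pos hu s hres
    calc Complex.abs ((u:ℂ) - w) * (s.map fun z => Complex.abs ((u:ℂ) - z)).prod
        ≤ Complex.abs ((u:ℂ) - w) * (s.map fun z => Complex.abs ((u:ℂ) + z)).prod :=
          mul_le_mul_of_nonneg_left (aux_prod_le hu.le s hres) (AbsoluteValue.nonneg _ _)
      _ < Complex.abs ((u:ℂ) + w) * (s.map fun z => Complex.abs ((u:ℂ) + z)).prod :=
          mul_lt_mul_of_pos_right (aux_abs_lt hu hwre) hQpos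
  have hNne : ∀ u : ℝ, 0 < u → Nf u ≠ 0 := by
    intro u hu h
    have h1 := habslt u hu
    rw [h, abs_zero] at h1
    exact absurd h1 (not_lt.mpr (abs_nonneg _))
  have hNcont : Continuous Nf := by
    rw [hNf]
    exact continuous_const.mul ((Polynomial.continuous f).comp continuous_neg)
  have hNtend : Tendsto Nf atTop atTop := by
    set Fp : Polynomial ℝ := Polynomial.C ((-1:ℝ)^n) * (f.comp (-Polynomial.X)) with hFp
    have hc : ((-1:ℝ)^n) ≠ 0 := by positivity
    have hdq : (-Polynomial.X : Polynomial ℝ).natDegree = 1 := by simp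
    have hlcq : (-Polynomial.X : Polynomial ℝ).leadingCoeff = -1 := by simp
    have hlc : Fp.leadingCoeff = 1 := by
      rw [hFp, Polynomial.leadingCoeff_mul, Polynomial.leadingCoeff_C,
        Polynomial.leadingCoeff_comp (by omega), hlcq, hmonic.leadingCoeff, hdeg]
      rw [one_mul, ← pow_add]
      exact Even.neg_one_pow ⟨n, rfl⟩
    have hdegF : Fp.natDegree = n := by
      rw [hFp, Polynomial.natDegree_C_mul hc, Polynomial.natDegree_comp, hdq, hdeg, mul_one]
    have hdpos : 0 < Fp.degree := Polynomial.natDegree_pos_iff_degree_pos.mp (by omega)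
    have ht := Polynomial.tendsto_atTop_of_leadingCoeff_nonneg Fp hdpos (by rw [hlc]; norm_num)
    have heq : Nf = fun u => Fp.eval u := by
      funext u
      rw [hNf, hFp]
      simp [Polynomial.eval_comp]
    rw [heq]
    exact ht
  have hNpos : ∀ u : ℝ, 0 < u → 0 < Nf u := by
    intro u hu
    by_contra hcon
    push_neg at hcon
    have hlt : Nf u < 0 := lt_of_le_of_ne hcon (hNne u hu)
    obtain ⟨u₁, hN₁, hu₁⟩ := ((hNtend.eventually_gt_atTop 0).and (eventually_ge_atTop u)).exists
    obtain ⟨c, hc, hc0⟩ := intermediate_value_Icc hu₁ hNcont.continuousOn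
      (show (0:ℝ) ∈ Set.Icc (Nf u) (Nf u₁) from ⟨hlt.le, hN₁.le⟩)
    exact hNne c (lt_of_lt_of_le hu hc.1) hc0
  -- identities for p and q
  have Hsub : ∀ u : ℝ, p u - q u = f.eval u := by
    intro u
    have he : f.eval u = ∑ j ∈ Finset.range (n+1), f.coeff j * u ^ j := by
      rw [Polynomial.eval_eq_sum_range, hdeg]
    rw [hp, hq, ← Finset.sum_sub_distrib, he]
    apply Finset.sum_congr rfl
    intro j _
    rcases Nat.mod_two_eq_zero_or_one (n + j) with h | h
    · rw [if_pos h, if_neg (by omega : ¬ (n+j) % 2 = 1)]; ring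
    · rw [if_neg (by omega : ¬ (n+j) % 2 = 0), if_pos h]; ring
  have Hadd : ∀ u : ℝ, p u + q u = Nf u := by
    intro u
    have he' : f.eval (-u) = ∑ j ∈ Finset.range (n+1), f.coeff j * (-u) ^ j := by
      rw [Polynomial.eval_eq_sum_range, hdeg]
    rw [hp, hq, ← Finset.sum_add_distrib, hNf]
    show _ = (-1:ℝ)^n * f.eval (-u)
    rw [he', Finset.mul_sum]
    apply Finset.sum_congr rfl
    intro j _
    rw [show (-u) ^ j = (-1:ℝ)^j * u ^ j from neg_pow u j]
    rcases Nat.mod_two_eq_zero_or_one (n + j) with h | h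
    · have h1 : (-1:ℝ)^n * (-1:ℝ)^j = 1 := by
        rw [← pow_add]; exact (Nat.even_iff.mpr h).neg_one_pow
      rw [if_pos h, if_neg (by omega : ¬ (n+j) % 2 = 1)]
      linear_combination (-(f.coeff j * u ^ j)) * h1
    · have h1 : (-1:ℝ)^n * (-1:ℝ)^j = -1 := by
        rw [← pow_add]; exact (Nat.odd_iff.mpr h).neg_one_pow
      rw [if_neg (by omega : ¬ (n+j) % 2 = 0), if_pos h]
      linear_combination (-(f.coeff j * u ^ j)) * h1
  have hppos : ∀ u : ℝ, 0 < u → 0 < p u := by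
    intro u hu
    have h1 := habslt u hu
    rw [abs_of_pos (hNpos u hu)] at h1
    have h2 := abs_lt.mp h1
    have h3 := Hsub u
    have h4 := Hadd u
    linarith [h2.1, h2.2]
  have hqpos : ∀ u : ℝ, 0 < u → 0 < q u := by
    intro u hu
    have h1 := habslt u hu
    rw [abs_of_pos (hNpos u hu)] at h1
    have h2 := abs_lt.mp h1
    have h3 := Hsub u
    have h4 := Hadd u
    linarith [h2.1, h2.2]
  -- the key inequality
  have hkey : ∀ r : ℝ, f.IsRoot r → ∀ u : ℝ, 0 < u →
      (u + r) * f.eval u ≤ |u - r| * Nf u := by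
    intro r hr u hu
    have hr0 : 0 ≤ r := hroot_nonneg r hr
    have hrroot : (r:ℂ) ∈ g.roots := by
      rw [Polynomial.mem_roots hg0]
      show g.eval (r:ℂ) = 0
      rw [hgeval r]
      simp [hr.eq_zero]
    obtain ⟨s, hs⟩ := Multiset.exists_cons_of_mem hrroot
    have hres : ∀ z ∈ s, 0 ≤ z.re := fun z hz => hre z (hs ▸ Multiset.mem_cons_of_mem hz)
    have e1 : |f.eval u| = |u - r| * (s.map fun z => Complex.abs ((u:ℂ) - z)).prod := by
      rw [habsf, hs, Multiset.map_cons, Multiset.prod_cons]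
      congr 1
      rw [show ((u:ℂ) - (r:ℂ)) = ((u - r : ℝ) : ℂ) by push_cast; ring, Complex.abs_ofReal]
    have e2 : Nf u = (u + r) * (s.map fun z => Complex.abs ((u:ℂ) + z)).prod := by
      rw [← abs_of_pos (hNpos u hu), habsN, hs, Multiset.map_cons, Multiset.prod_cons]
      congr 1
      rw [show ((u:ℂ) + (r:ℂ)) = ((u + r : ℝ) : ℂ) by push_cast; ring, Complex.abs_ofReal,
        abs_of_pos (by linarith)]
    calc (u + r) * f.eval u ≤ (u + r) * |f.eval u| :=
        mul_le_mul_of_nonneg_left (le_abs_self _) (by linarith)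
      _ = |u - r| * ((u + r) * (s.map fun z => Complex.abs ((u:ℂ) - z)).prod) := by
          rw [e1]; ring
      _ ≤ |u - r| * ((u + r) * (s.map fun z => Complex.abs ((u:ℂ) + z)).prod) := by
          apply mul_le_mul_of_nonneg_left _ (abs_nonneg _)
          exact mul_le_mul_of_nonneg_left (aux_prod_le hu.le s hres) (by linarith)
      _ = |u - r| * Nf u := by rw [e2]
  -- basic positivity
  have ha0 : 0 ≤ a := by
    rcases ha with h | h
    · exact le_of_eq h.symm
    · exact hroot_nonneg a h
  have hx₀pos : 0 < x₀ := lt_of_le_of_lt ha0 hax₀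
  have hbpos : 0 < b := hx₀pos.trans hx₀b
  -- f is positive on (a, b)
  have hfx₀ : 0 < f.eval x₀ := by rw [← Hsub x₀]; linarith
  have hfpos : ∀ u : ℝ, a < u → u < b → 0 < f.eval u := by
    intro u h1 h2
    by_contra hcon
    push_neg at hcon
    have hne : f.eval u ≠ 0 := fun h => hnoroot u h1 h2 h
    have hlt : f.eval u < 0 := lt_of_le_of_ne hcon hne
    rcases le_or_gt u x₀ with hc | hc
    · obtain ⟨c, hc', hc0⟩ := intermediate_value_Icc hc
        (Polynomial.continuous f).continuousOn
        (show (0:ℝ) ∈ Set.Icc (f.eval u) (f.eval x₀) from ⟨hlt.le, hfx₀.le⟩)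
      exact hnoroot c (lt_of_lt_of_le h1 hc'.1) (lt_of_le_of_lt hc'.2 hx₀b) hc0
    · obtain ⟨c, hc', hc0⟩ := intermediate_value_Icc' hc.le
        (Polynomial.continuous f).continuousOn
        (show (0:ℝ) ∈ Set.Icc (f.eval u) (f.eval x₀) from ⟨hlt.le, hfx₀.le⟩)
      exact hnoroot c (lt_of_lt_of_le hax₀ hc'.1) (lt_of_le_of_lt hc'.2 h2) hc0
  have hfnonneg : ∀ u : ℝ, a < u → u ≤ b → 0 ≤ f.eval u := by
    intro u h1 h2
    rcases h2.lt_or_eq with h2 | rfl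
    · exact (hfpos u h1 h2).le
    · exact le_of_eq hb.eq_zero.symm
  -- invariants for x
  have hxinv : ∀ t, x₀ ≤ x t ∧ x t ≤ b := by
    intro t
    induction t with
    | zero => rw [hx0]; exact ⟨le_refl _, hx₀b.le⟩
    | succ t ih =>
      obtain ⟨h1, h2⟩ := ih
      have hu : 0 < x t := lt_of_lt_of_le hx₀pos h1
      have hqp := hqpos (x t) hu
      have hf : 0 ≤ f.eval (x t) := hfnonneg _ (lt_of_lt_of_le hax₀ h1) h2
      have hsub := Hsub (x t)
      have hadd := Hadd (x t)
      constructor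
      · rw [hxrec t, le_div_iff₀ hqp]
        have hqlep : q (x t) ≤ p (x t) := by linarith
        calc x₀ * q (x t) ≤ x t * q (x t) := mul_le_mul_of_nonneg_right h1 hqp.le
          _ ≤ x t * p (x t) := mul_le_mul_of_nonneg_left hqlep hu.le
      · rw [hxrec t, div_le_iff₀ hqp]
        have hk := hkey b hb (x t) hu
        rw [abs_of_nonpos (by linarith : x t - b ≤ 0), ← hsub, ← hadd] at hk
        nlinarith [hk]
  have hxstep : ∀ t, x t ≤ x (t + 1) := by
    intro t
    obtain ⟨h1, h2⟩ := hxinv t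
    have hu : 0 < x t := lt_of_lt_of_le hx₀pos h1
    have hqp := hqpos (x t) hu
    have hf : 0 ≤ f.eval (x t) := hfnonneg _ (lt_of_lt_of_le hax₀ h1) h2
    have hsub := Hsub (x t)
    rw [hxrec t, le_div_iff₀ hqp]
    have hqlep : q (x t) ≤ p (x t) := by linarith
    exact mul_le_mul_of_nonneg_left hqlep hu.le
  have hmono : Monotone x := monotone_nat_of_le_succ hxstep
  -- continuity of p and q
  have hpeq : p = fun u => (f.eval u + Nf u) / 2 := by
    funext u
    have := Hsub u; have := Hadd u; linarith
  have hqeq : q = fun u => (Nf u - f.eval u) / 2 := by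
    funext u
    have := Hsub u; have := Hadd u; linarith
  have hpcont : Continuous p := by
    rw [hpeq]; exact ((Polynomial.continuous f).add hNcont).div_const 2
  have hqcont : Continuous q := by
    rw [hqeq]; exact (hNcont.sub (Polynomial.continuous f)).div_const 2
  -- convergence of x
  have hbdd : BddAbove (Set.range x) := ⟨b, by rintro _ ⟨t, rfl⟩; exact (hxinv t).2⟩
  have hxt : Tendsto x atTop (nhds (⨆ t, x t)) := tendsto_atTop_ciSup hmono hbdd
  set L := ⨆ t, x t with hL
  have hL1 : x₀ ≤ L := hx0 ▸ le_ciSup hbdd 0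
  have hL2 : L ≤ b := ciSup_le (fun t => (hxinv t).2)
  have hLpos : 0 < L := lt_of_lt_of_le hx₀pos hL1
  have hqL : q L ≠ 0 := (hqpos L hLpos).ne'
  have hcontx : ContinuousAt (fun u => u * p u / q u) L :=
    ContinuousAt.div (continuousAt_id.mul hpcont.continuousAt) hqcont.continuousAt hqL
  have h1 : Tendsto (fun t => x (t+1)) atTop (nhds L) := hxt.comp (tendsto_add_atTop_nat 1)
  have h2 : Tendsto (fun t => x t * p (x t) / q (x t)) atTop (nhds (L * p L / q L)) :=
    hcontx.tendsto.comp hxt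
  have h3 : (fun t => x (t+1)) = fun t => x t * p (x t) / q (x t) := funext hxrec
  rw [h3] at h1
  have hLfix : L * p L / q L = L := tendsto_nhds_unique h2 h1
  have hfL : f.eval L = 0 := by
    rw [div_eq_iff hqL] at hLfix
    have hpl : p L = q L := mul_left_cancel₀ hLpos.ne' (by linarith [hLfix])
    rw [← Hsub L, hpl, sub_self]
  have hLb : L = b := by
    by_contra hne
    exact hnoroot L (lt_of_lt_of_le hax₀ hL1) (lt_of_le_of_ne hL2 hne) hfL
  -- invariants for y
  have hyinv : ∀ t, (0 < y t ∧ a ≤ y t) ∧ y t ≤ x₀ := by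
    intro t
    induction t with
    | zero => rw [hy0]; exact ⟨⟨hx₀pos, hax₀.le⟩, le_refl _⟩
    | succ t ih =>
      obtain ⟨⟨hu, h1⟩, h2⟩ := ih
      have hqp := hqpos (y t) hu
      have hpp := hppos (y t) hu
      have hsub := Hsub (y t)
      have hadd := Hadd (y t)
      have hf : 0 ≤ f.eval (y t) := by
        rcases h1.lt_or_eq with hlt | heq
        · exact (hfpos _ hlt (lt_of_le_of_lt h2 hx₀b)).le
        · rcases ha with rfl | har
          · exact absurd heq (by linarith)
          · rw [heq] at har
            exact le_of_eq har.eq_zero.symm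
      have hypos : 0 < y (t+1) := by
        rw [hyrec t]
        exact div_pos (mul_pos hu hqp) hpp
      refine ⟨⟨hypos, ?_⟩, ?_⟩
      · rcases ha with rfl | har
        · exact hypos.le
        · rw [hyrec t, le_div_iff₀ hpp]
          have hk := hkey a har (y t) hu
          rw [abs_of_nonneg (by linarith : 0 ≤ y t - a), ← hsub, ← hadd] at hk
          nlinarith [hk]
      · rw [hyrec t, div_le_iff₀ hpp]
        have hqlep : q (y t) ≤ p (y t) := by linarith
        calc y t * q (y t) ≤ y t * p (y t) := mul_le_mul_of_nonneg_left hqlep hu.le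
          _ ≤ x₀ * p (y t) := mul_le_mul_of_nonneg_right h2 hpp.le
  have hystep : ∀ t, y (t + 1) ≤ y t := by
    intro t
    obtain ⟨⟨hu, h1⟩, h2⟩ := hyinv t
    have hpp := hppos (y t) hu
    have hsub := Hsub (y t)
    have hf : 0 ≤ f.eval (y t) := by
      rcases h1.lt_or_eq with hlt | heq
      · exact (hfpos _ hlt (lt_of_le_of_lt h2 hx₀b)).le
      · rcases ha with rfl | har
        · exact absurd heq (by linarith)
        · rw [heq] at har
          exact le_of_eq har.eq_zero.symm
    rw [hyrec t, div_le_iff₀ hpp]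
    have hqlep : q (y t) ≤ p (y t) := by linarith
    exact mul_le_mul_of_nonneg_left hqlep hu.le
  have hanti : Antitone y := antitone_nat_of_succ_le hystep
  have hybdd : BddBelow (Set.range y) := ⟨a, by rintro _ ⟨t, rfl⟩; exact (hyinv t).1.2⟩
  have hyt : Tendsto y atTop (nhds (⨅ t, y t)) := tendsto_atTop_ciInf hanti hybdd
  set M := ⨅ t, y t with hM
  have hM1 : a ≤ M := le_ciInf (fun t => (hyinv t).1.2)
  have hM2 : M ≤ x₀ := hy0 ▸ ciInf_le hybdd 0
  have hMa : M = a := by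
    by_contra hne
    have hMgt : a < M := lt_of_le_of_ne hM1 (Ne.symm hne)
    have hMpos : 0 < M := lt_of_le_of_lt ha0 hMgt
    have hpM : p M ≠ 0 := (hppos M hMpos).ne'
    have hconty : ContinuousAt (fun u => u * q u / p u) M :=
      ContinuousAt.div (continuousAt_id.mul hqcont.continuousAt) hpcont.continuousAt hpM
    have h1' : Tendsto (fun t => y (t+1)) atTop (nhds M) := hyt.comp (tendsto_add_atTop_nat 1)
    have h2' : Tendsto (fun t => y t * q (y t) / p (y t)) atTop (nhds (M * q M / p M)) :=
      hconty.tendsto.comp hyt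
    have h3' : (fun t => y (t+1)) = fun t => y t * q (y t) / p (y t) := funext hyrec
    rw [h3'] at h1'
    have hMfix : M * q M / p M = M := tendsto_nhds_unique h2' h1'
    rw [div_eq_iff hpM] at hMfix
    have hql : q M = p M := mul_left_cancel₀ hMpos.ne' (by linarith [hMfix])
    have hfM : f.eval M = 0 := by rw [← Hsub M, hql, sub_self]
    exact hnoroot M hMgt (lt_of_le_of_lt hM2 hx₀b) hfM
  refine ⟨⟨hmono, fun t => ⟨(hxinv t).1, (hxinv t).2⟩, hLb ▸ hxt⟩,
    ⟨hanti, fun t => ⟨(hyinv t).1.2, (hyinv t).2⟩, hMa ▸ hyt⟩⟩
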